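/- The formal delta function admits the elliptic partial-fraction expansion δ(x)/(p;p)_∞^2 = [1/θ(x;p)]_+ + [x^{-1}/θ(x^{-1};p)]_−, where the first term is expanded in nonnegative powers of x using 1/θ(x;p) = 1/((1−x)(xp;p)_∞(px^{-1};p)_∞) and the recursion, and the second in negative powers of x. -/

import Mathlib

open Complex Metric

/-- The infinite q-Pochhammer symbol `(z;p)_∞ = ∏_{m=0}^∞ (1 − z p^m)`. -/
noncomputable def qPochInf (z p : ℂ) : ℂ := ∏' m : ℕ, (1 - z * p ^ m)

/-- The theta function `θ(x;p) = (x;p)_∞ (p x⁻¹;p)_∞`. -/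
noncomputable def thetaFn (x p : ℂ) : ℂ := qPochInf x p * qPochInf (p * x⁻¹) p


lemma norm_log_le' {w : ℂ} (hw : ‖w‖ < 1) : ‖Complex.log (1 - w)‖ ≤ (1 - ‖w‖)⁻¹ * ‖w‖ := by
  have h := Complex.norm_log_one_add_le (z := -w) (by simpa using hw)
  rw [show (1 : ℂ) + -w = 1 - w by ring, norm_neg] at h
  refine h.trans ?_
  set t := ‖w‖ with ht
  have ht0 : 0 ≤ t := norm_nonneg w
  have h3 : (0:ℝ) < 1 - t := by linarith
  have hs : (0:ℝ) < (1 - t)⁻¹ := by positivity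
  have h4 : (1 - t)⁻¹ * (1 - t) = 1 := inv_mul_cancel₀ h3.ne'
  nlinarith [mul_nonneg (mul_nonneg ht0 ht0) hs.le]

lemma norm_term_lt {p z : ℂ} (hp : ‖p‖ < 1) (hz : ‖z‖ < 1) (m : ℕ) : ‖z * p ^ m‖ < 1 := by
  rw [norm_mul, norm_pow]
  calc ‖z‖ * ‖p‖ ^ m ≤ ‖z‖ * 1 := by
        gcongr
        exact pow_le_one₀ (norm_nonneg _) hp.le
    _ = ‖z‖ := mul_one _
    _ < 1 := hz

lemma term_ne_zero {w : ℂ} (hw : ‖w‖ < 1) : (1 : ℂ) - w ≠ 0 := by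
  intro h
  have : w = 1 := by linear_combination -h
  rw [this] at hw; simp at hw

lemma summable_log' {p z : ℂ} (hp : ‖p‖ < 1) (hz : ‖z‖ < 1) :
    Summable (fun m : ℕ => Complex.log (1 - z * p ^ m)) := by
  apply Summable.of_norm_bounded (g := fun m => (1 - ‖z‖)⁻¹ * (‖z‖ * ‖p‖ ^ m))
  · exact ((summable_geometric_of_lt_one (norm_nonneg p) hp).mul_left _).mul_left _
  · intro m
    have h1 : ‖z * p ^ m‖ < 1 := norm_term_lt hp hz m
    refine (norm_log_le' h1).trans ?_
    rw [norm_mul, norm_pow]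
    have h2 : ‖z‖ * ‖p‖ ^ m ≤ ‖z‖ := by
      calc ‖z‖ * ‖p‖ ^ m ≤ ‖z‖ * 1 := by
            gcongr; exact pow_le_one₀ (norm_nonneg _) hp.le
        _ = ‖z‖ := mul_one _
    apply mul_le_mul ?_ le_rfl (by positivity) (inv_nonneg.mpr (by linarith))
    apply inv_anti₀ (by linarith) (by linarith)


lemma qPoch_eq_exp {p z : ℂ} (hp : ‖p‖ < 1) (hz : ‖z‖ < 1) :
    qPochInf z p = Complex.exp (∑' m : ℕ, Complex.log (1 - z * p ^ m)) := by
  have h := Complex.cexp_tsum_eq_tprod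
      (f := fun m => 1 - z * p ^ m)
      (fun m => term_ne_zero (norm_term_lt hp hz m))
      (summable_log' hp hz)
  exact h.symm

lemma qPoch_ne_zero {p z : ℂ} (hp : ‖p‖ < 1) (hz : ‖z‖ < 1) : qPochInf z p ≠ 0 := by
  rw [qPoch_eq_exp hp hz]; exact Complex.exp_ne_zero _

lemma qPoch_multipliable {p z : ℂ} (hp : ‖p‖ < 1) (hz : ‖z‖ < 1) :
    Multipliable (fun m : ℕ => 1 - z * p ^ m) := by
  have h := Complex.multipliable_of_summable_log (summable_log' hp hz)
  exact h

lemma qPoch_split {p z : ℂ} (hp : ‖p‖ < 1) (hz : ‖z‖ < 1) :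
    qPochInf z p = (1 - z) * qPochInf (z * p) p := by
  have hzp : ‖z * p‖ < 1 := by
    rw [norm_mul]
    calc ‖z‖ * ‖p‖ ≤ 1 * ‖p‖ := by gcongr
      _ = ‖p‖ := one_mul _
      _ < 1 := hp
  have hm' : Multipliable (fun m : ℕ => 1 - z * p ^ (m + 1)) :=
    (qPoch_multipliable hp hzp).congr fun m => by ring
  have h := tprod_eq_zero_mul' (f := fun m : ℕ => 1 - z * p ^ m) hm'
  rw [qPochInf, h]
  simp only [pow_zero, mul_one]
  congr 1
  exact tprod_congr fun m => by ring

lemma one_sub_mem_slitPlane {w : ℂ} (hw : ‖w‖ < 1) : (1 : ℂ) - w ∈ Complex.slitPlane := by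
  rw [Complex.mem_slitPlane_iff]
  left
  have h1 : |w.re| ≤ ‖w‖ := Complex.abs_re_le_norm w
  have h2 : ‖w‖ = ‖w‖ := rfl
  have h3 := abs_le.mp h1
  simp only [Complex.sub_re, Complex.one_re]
  linarith [h3.2]

lemma qPoch_diffAt {p z : ℂ} (hp : ‖p‖ < 1) (hz : ‖z‖ < 1) :
    DifferentiableAt ℂ (fun w => qPochInf w p) z := by
  set ρ : ℝ := (‖z‖ + 1) / 2 with hρ
  have hρ1 : ρ < 1 := by rw [hρ]; linarith
  have hzρ : ‖z‖ < ρ := by rw [hρ]; linarith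
  have hρ0 : 0 ≤ ρ := le_of_lt (lt_of_le_of_lt (norm_nonneg z) hzρ)
  have hball : ∀ w : ℂ, w ∈ ball (0:ℂ) ρ → ‖w‖ < 1 := fun w hw =>
    lt_trans (mem_ball_zero_iff.mp hw) hρ1
  have hL : DifferentiableOn ℂ (fun w => ∑' m : ℕ, Complex.log (1 - w * p ^ m))
      (ball (0:ℂ) ρ) := by
    apply TendstoLocallyUniformlyOn.differentiableOn
        (φ := (Filter.atTop : Filter (Finset ℕ)))
        (F := fun (t : Finset ℕ) (w : ℂ) => ∑ m ∈ t, Complex.log (1 - w * p ^ m))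
    · apply TendstoUniformlyOn.tendstoLocallyUniformlyOn
      apply tendstoUniformlyOn_tsum (u := fun m : ℕ => (1 - ρ)⁻¹ * (ρ * ‖p‖ ^ m))
      · exact ((summable_geometric_of_lt_one (norm_nonneg p) hp).mul_left _).mul_left _
      · intro m w hw
        have hw1 : ‖w‖ < ρ := mem_ball_zero_iff.mp hw
        have h1 : ‖w * p ^ m‖ < 1 := norm_term_lt hp (hball w hw) m
        refine (norm_log_le' h1).trans ?_
        rw [norm_mul, norm_pow]
        have h2 : ‖w‖ * ‖p‖ ^ m ≤ ρ * ‖p‖ ^ m := by gcongr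
        have h3 : ρ * ‖p‖ ^ m ≤ ρ := by
          calc ρ * ‖p‖ ^ m ≤ ρ * 1 := by
                gcongr; exact pow_le_one₀ (norm_nonneg _) hp.le
            _ = ρ := mul_one _
        apply mul_le_mul ?_ h2 (by positivity) (inv_nonneg.mpr (by linarith))
        apply inv_anti₀ (by linarith) (by linarith)
    · apply Filter.Eventually.of_forall
      intro t
      apply DifferentiableOn.fun_sum
      intro m _
      intro w hw
      apply DifferentiableAt.differentiableWithinAt
      apply DifferentiableAt.clog
      · exact (differentiableAt_const _).sub (differentiableAt_id.mul (differentiableAt_const _))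
      · exact one_sub_mem_slitPlane (norm_term_lt hp (hball w hw) m)
    · exact isOpen_ball
  have hqd : DifferentiableOn ℂ (fun w => qPochInf w p) (ball (0:ℂ) ρ) := by
    apply DifferentiableOn.congr hL.cexp
    intro w hw
    exact qPoch_eq_exp hp (hball w hw)
  exact hqd.differentiableAt (isOpen_ball.mem_nhds (mem_ball_zero_iff.mpr hzρ))

lemma decomp_aux {c : ℂ} (hc : c ≠ 1) (a b : ℂ) :
    a * (1 - c)⁻¹ = b * (1 - c)⁻¹ - (a - b) / (c - 1) := by
  have h1 : (1:ℂ) - c ≠ 0 := sub_ne_zero.mpr (Ne.symm hc)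
  have h2 : c - 1 ≠ 0 := sub_ne_zero.mpr hc
  field_simp
  ring

/-- Elliptic partial fraction expansion of the formal delta function:
`δ(x)/(p;p)_∞² = [1/θ(x;p)]₊ + [x⁻¹/θ(x⁻¹;p)]₋`.  Coefficientwise, for every `n ∈ ℤ`, the
`n`-th Laurent coefficient of the expansion of `1/θ(x;p)` in the annulus `‖p‖ < |x| < 1`
(where the `+` expansion converges) plus the `n`-th Laurent coefficient of the expansion of
`x⁻¹/θ(x⁻¹;p)` in the annulus `1 < |x| < ‖p‖⁻¹` (where the `−` expansion converges) equals
`1/(p;p)_∞²`, the `n`-th coefficient of `δ(x)/(p;p)_∞²`. -/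
theorem delta_theta_expansion (p : ℂ) (hp : ‖p‖ < 1) (hp0 : p ≠ 0)
    (r R : ℝ) (hr1 : ‖p‖ < r) (hr2 : r < 1) (hR1 : 1 < R) (hR2 : R < ‖p‖⁻¹) (n : ℤ) :
    (2 * (Real.pi : ℂ) * Complex.I)⁻¹ *
        (∮ x in C(0, r), x ^ (-n - 1) * (thetaFn x p)⁻¹) +
      (2 * (Real.pi : ℂ) * Complex.I)⁻¹ *
        (∮ x in C(0, R), x ^ (-n - 1) * (x⁻¹ * (thetaFn x⁻¹ p)⁻¹)) =
      (qPochInf p p ^ 2)⁻¹ := by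

  have hpn : 0 < ‖p‖ := norm_pos_iff.mpr hp0
  have hr0 : 0 < r := lt_trans hpn hr1
  have hR0 : (0:ℝ) < R := lt_trans one_pos hR1
  have hrR : r ≤ R := le_of_lt (lt_trans hr2 hR1)
  have hpinv : 1 < ‖p‖⁻¹ := (one_lt_inv₀ hpn).mpr hp
  set G : ℂ → ℂ := fun x => qPochInf (p * x) p * qPochInf (p * x⁻¹) p with hGdef
  set A : Set ℂ := {x : ℂ | ‖p‖ < ‖x‖ ∧ ‖x‖ < ‖p‖⁻¹} with hAdef
  have hAopen : IsOpen A := by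
    rw [hAdef, Set.setOf_and]
    exact (isOpen_lt continuous_const continuous_norm).inter
      (isOpen_lt continuous_norm continuous_const)
  have hA1 : ∀ x ∈ A, x ≠ 0 := by
    intro x hx h
    rw [h] at hx
    simp only [hAdef, Set.mem_setOf_eq, norm_zero] at hx
    exact absurd hx.1 (not_lt.mpr hpn.le)
  have hApx : ∀ x ∈ A, ‖p * x‖ < 1 := by
    intro x hx
    rw [norm_mul]
    calc ‖p‖ * ‖x‖ < ‖p‖ * ‖p‖⁻¹ := by
          exact mul_lt_mul_of_pos_left hx.2 hpn
      _ = 1 := mul_inv_cancel₀ hpn.ne'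
  have hApxi : ∀ x ∈ A, ‖p * x⁻¹‖ < 1 := by
    intro x hx
    have hx0 : (0:ℝ) < ‖x‖ := lt_trans hpn hx.1
    rw [norm_mul, norm_inv]
    calc ‖p‖ * ‖x‖⁻¹ < ‖p‖ * ‖p‖⁻¹ := by
          apply mul_lt_mul_of_pos_left _ hpn
          exact inv_strictAnti₀ hpn hx.1
      _ = 1 := mul_inv_cancel₀ hpn.ne'
  have h1A : (1:ℂ) ∈ A := by
    constructor <;> simp only [norm_one]
    · exact hp
    · exact hpinv
  have hGd : DifferentiableOn ℂ G A := by
    intro x hx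
    apply DifferentiableAt.differentiableWithinAt
    have hx0 := hA1 x hx
    have d1 : DifferentiableAt ℂ (fun y : ℂ => qPochInf (p * y) p) x := by
      have := (qPoch_diffAt hp (hApx x hx)).comp x
        ((differentiableAt_const p).mul differentiableAt_id)
      exact this
    have d2 : DifferentiableAt ℂ (fun y : ℂ => qPochInf (p * y⁻¹) p) x := by
      have hin : DifferentiableAt ℂ (fun y : ℂ => p * y⁻¹) x :=
        (differentiableAt_const p).mul (differentiableAt_fun_id.inv hx0)
      have := (qPoch_diffAt hp (hApxi x hx)).comp (f := fun y : ℂ => p * y⁻¹) x hin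
      exact this
    exact d1.mul d2
  have hGne : ∀ x ∈ A, G x ≠ 0 := fun x hx =>
    mul_ne_zero (qPoch_ne_zero hp (hApx x hx)) (qPoch_ne_zero hp (hApxi x hx))
  set φ : ℂ → ℂ := fun x => x ^ (-n - 1) * (G x)⁻¹ with hφdef
  have hφd : DifferentiableOn ℂ φ A := by
    intro x hx
    apply DifferentiableAt.differentiableWithinAt
    exact (differentiableAt_zpow.mpr (Or.inl (hA1 x hx))).mul
      ((hGd.differentiableAt (hAopen.mem_nhds hx)).inv (hGne x hx))
  have hds : DifferentiableOn ℂ (dslope φ 1) A :=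
    (Complex.differentiableOn_dslope (hAopen.mem_nhds h1A)).mpr hφd
  have hdsc : ContinuousOn (dslope φ 1) A := hds.continuousOn
  have hφ1 : φ 1 = (qPochInf p p ^ 2)⁻¹ := by
    simp only [hφdef, hGdef, one_zpow, one_mul, mul_one, inv_one, sq]
  set F : ℂ → ℂ := fun x => x ^ (-n - 1) * ((1 - x) * G x)⁻¹ with hFdef
  have thetaEq : ∀ x : ℂ, ‖x‖ < 1 → thetaFn x p = (1 - x) * G x := by
    intro x hx
    rw [thetaFn, qPoch_split hp hx, hGdef, mul_comm x p]
    ring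
  have decomp : ∀ x ∈ A, x ≠ 1 → F x = φ 1 * (1 - x)⁻¹ - dslope φ 1 x := by
    intro x hx hx1
    have h1x : (1:ℂ) - x ≠ 0 := sub_ne_zero.mpr (Ne.symm hx1)
    have hx1' : x - 1 ≠ 0 := sub_ne_zero.mpr hx1
    have hφx : φ x = x ^ (-n - 1) * (G x)⁻¹ := rfl
    have hFx : F x = (x ^ (-n - 1) * (G x)⁻¹) * (1 - x)⁻¹ := by
      show x ^ (-n - 1) * ((1 - x) * G x)⁻¹ = _
      rw [mul_inv]; ring
    rw [dslope_of_ne _ hx1, slope_def_field, hFx, hφx]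
    exact decomp_aux hx1 _ _
  -- congruence on the inner circle
  have hIr : (∮ x in C(0, r), x ^ (-n - 1) * (thetaFn x p)⁻¹)
      = ∮ x in C(0, r), (φ 1 * (1 - x)⁻¹ - dslope φ 1 x) := by
    apply circleIntegral.integral_congr hr0.le
    intro x hx
    have hxn : ‖x‖ = r := mem_sphere_zero_iff_norm.mp hx
    have hxA : x ∈ A := ⟨by rw [hxn]; exact hr1, by rw [hxn]; linarith⟩
    have hx1 : x ≠ 1 := by
      intro h; rw [h, norm_one] at hxn; linarith
    show x ^ (-n - 1) * (thetaFn x p)⁻¹ = _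
    rw [thetaEq x (by rw [hxn]; exact hr2)]
    exact decomp x hxA hx1
  -- congruence on the outer circle
  have hIR : (∮ x in C(0, R), x ^ (-n - 1) * (x⁻¹ * (thetaFn x⁻¹ p)⁻¹))
      = ∮ x in C(0, R), (dslope φ 1 x - φ 1 * (1 - x)⁻¹) := by
    apply circleIntegral.integral_congr hR0.le
    intro x hx
    have hxn : ‖x‖ = R := mem_sphere_zero_iff_norm.mp hx
    have hxA : x ∈ A := ⟨by rw [hxn]; linarith, by rw [hxn]; exact hR2⟩
    have hx0 : x ≠ 0 := hA1 x hxA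
    have hx1 : x ≠ 1 := by intro h; rw [h, norm_one] at hxn; linarith
    have hxi : ‖x⁻¹‖ < 1 := by
      rw [norm_inv, hxn]
      exact inv_lt_one_of_one_lt₀ hR1
    have h1x : (1:ℂ) - x ≠ 0 := sub_ne_zero.mpr (Ne.symm hx1)
    have h1xi : (1:ℂ) - x⁻¹ ≠ 0 := by
      intro h
      have hinv : x⁻¹ = 1 := by linear_combination -h
      exact hx1 (inv_eq_one.mp hinv)
    have hGx : G x ≠ 0 := hGne x hxA
    have thetaInv : thetaFn x⁻¹ p = (1 - x⁻¹) * G x := by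
      rw [thetaFn, inv_inv, qPoch_split hp hxi, hGdef, mul_comm x⁻¹ p]
      ring
    show x ^ (-n - 1) * (x⁻¹ * (thetaFn x⁻¹ p)⁻¹) = _
    rw [thetaInv]
    have key : x⁻¹ * ((1 - x⁻¹) * G x)⁻¹ = -((1 - x) * G x)⁻¹ := by
      rw [← mul_inv, show x * ((1 - x⁻¹) * G x) = -((1 - x) * G x) from by field_simp; ring,
        inv_neg]
    rw [key]
    have h : x ^ (-n - 1) * ((1 - x) * G x)⁻¹ = φ 1 * (1 - x)⁻¹ - dslope φ 1 x :=
      decomp x hxA hx1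
    linear_combination -h
  -- subsets
  have hsub_r : sphere (0:ℂ) r ⊆ A := by
    intro x hx
    have hxn : ‖x‖ = r := mem_sphere_zero_iff_norm.mp hx
    exact ⟨by rw [hxn]; exact hr1, by rw [hxn]; linarith⟩
  have hsub_R : sphere (0:ℂ) R ⊆ A := by
    intro x hx
    have hxn : ‖x‖ = R := mem_sphere_zero_iff_norm.mp hx
    exact ⟨by rw [hxn]; linarith, by rw [hxn]; exact hR2⟩
  have hsub_ann : closedBall (0:ℂ) R \ ball (0:ℂ) r ⊆ A := by
    intro x hx
    have h1 : ‖x‖ ≤ R := mem_closedBall_zero_iff.mp hx.1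
    have h2 : r ≤ ‖x‖ := by
      by_contra h
      exact hx.2 (mem_ball_zero_iff.mpr (not_le.mp h))
    exact ⟨by linarith, by linarith⟩
  -- integrability
  have hInt_ds_r : CircleIntegrable (dslope φ 1) 0 r :=
    (hdsc.mono hsub_r).circleIntegrable hr0.le
  have hInt_ds_R : CircleIntegrable (dslope φ 1) 0 R :=
    (hdsc.mono hsub_R).circleIntegrable hR0.le
  have hcont_inv : ∀ ρ : ℝ, ρ ≠ 1 → ContinuousOn (fun x : ℂ => φ 1 * (1 - x)⁻¹) (sphere 0 ρ) := by
    intro ρ hρ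
    apply continuousOn_const.mul
    apply ContinuousOn.inv₀ (continuousOn_const.sub continuousOn_id)
    intro x hx
    have hxn : ‖x‖ = ρ := mem_sphere_zero_iff_norm.mp hx
    intro h
    simp only [Pi.sub_apply, id_eq] at h
    have : x = 1 := by linear_combination -h
    rw [this, norm_one] at hxn
    exact hρ hxn.symm
  have hInt_inv_r : CircleIntegrable (fun x : ℂ => φ 1 * (1 - x)⁻¹) 0 r :=
    (hcont_inv r (by linarith)).circleIntegrable hr0.le
  have hInt_inv_R : CircleIntegrable (fun x : ℂ => φ 1 * (1 - x)⁻¹) 0 R :=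
    (hcont_inv R (by linarith)).circleIntegrable hR0.le
  -- the inner (1-x)⁻¹ integral vanishes
  have hzero : (∮ x in C(0, r), (1 - x)⁻¹) = 0 := by
    apply Complex.circleIntegral_eq_zero_of_differentiable_on_off_countable hr0.le
      Set.countable_empty
    · apply ContinuousOn.inv₀ (continuousOn_const.sub continuousOn_id)
      intro x hx
      exact term_ne_zero (lt_of_le_of_lt (mem_closedBall_zero_iff.mp hx) hr2)
    · intro z hz
      apply DifferentiableAt.inv ((differentiableAt_const 1).sub differentiableAt_id)
      exact term_ne_zero (lt_trans (mem_ball_zero_iff.mp hz.1) hr2)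
  -- the outer (1-x)⁻¹ integral
  have h2pi : (∮ x in C(0, R), (1 - x)⁻¹) = -(2 * (Real.pi : ℂ) * Complex.I) := by
    have h1 : Set.EqOn (fun x : ℂ => (1 - x)⁻¹) (fun x : ℂ => (-1) * (x - 1)⁻¹)
        (sphere (0:ℂ) R) := by
      intro x _
      simp only
      rw [neg_one_mul, ← inv_neg, neg_sub]
    rw [circleIntegral.integral_congr hR0.le h1, circleIntegral.integral_const_mul,
      circleIntegral.integral_sub_inv_of_mem_ball (by simpa [mem_ball] using hR1)]
    ring
  -- annulus equality for dslope
  have hann : (∮ x in C(0, R), dslope φ 1 x) = ∮ x in C(0, r), dslope φ 1 x := by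
    apply circleIntegral_eq_of_differentiable_on_annulus_off_countable hr0 hrR
      Set.countable_empty (hdsc.mono hsub_ann)
    intro z hz
    have h1 : ‖z‖ < R := mem_ball_zero_iff.mp hz.1.1
    have h2 : ¬ ‖z‖ ≤ r := fun hh => hz.1.2 (mem_closedBall_zero_iff.mpr hh)
    have hzA : z ∈ A := ⟨by linarith [not_le.mp h2], by linarith⟩
    exact hds.differentiableAt (hAopen.mem_nhds hzA)
  -- assemble
  have e_r : (∮ x in C(0, r), (φ 1 * (1 - x)⁻¹ - dslope φ 1 x))
      = -(∮ x in C(0, r), dslope φ 1 x) := by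
    rw [circleIntegral.integral_sub hInt_inv_r hInt_ds_r,
      circleIntegral.integral_const_mul, hzero]
    ring
  have e_R : (∮ x in C(0, R), (dslope φ 1 x - φ 1 * (1 - x)⁻¹))
      = (∮ x in C(0, r), dslope φ 1 x) + φ 1 * (2 * (Real.pi : ℂ) * Complex.I) := by
    rw [circleIntegral.integral_sub hInt_ds_R hInt_inv_R,
      circleIntegral.integral_const_mul, h2pi, hann]
    ring
  rw [hIr, hIR, e_r, e_R, ← hφ1]
  have hne : (2 * (Real.pi : ℂ) * Complex.I) ≠ 0 := by
    simp [Real.pi_ne_zero, Complex.I_ne_zero, Complex.ofReal_ne_zero]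
  field_simp
  ring
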